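/- Let w ∈ S¹, η ∈ (0,1), lines L_k = x_k + ℝe_k in ℝ² with e_k ∈ C(w,η), and ρ_k > 0 with ∑_{k≥1} ρ_k < ∞; set E := ⋂_{n≥1} ⋃_{k≥n} B(L_k,ρ_k). Then for every C¹ curve γ : I → ℝ² satisfying γ'(t) ∉ Ĉ(w,η) for all t ∈ I, the set γ⁻¹(E) has Lebesgue measure zero. -/

import Mathlib

open MeasureTheory Filter Metric Set Topology RealInnerProductSpace

noncomputable section

set_option maxHeartbeats 1000000

/-- The Euclidean plane. -/
abbrev E2 := EuclideanSpace ℝ (Fin 2)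

/-- `IsC1Curve a b γ γ'` : `γ` restricted to the compact nondegenerate interval `[a,b]`
is a C¹ curve with (one-sided at endpoints) derivative `γ'`, continuous and of unit
norm on `[a,b]`. -/
def IsC1Curve (a b : ℝ) (γ γ' : ℝ → E2) : Prop :=
  a < b ∧ ContinuousOn γ' (Set.Icc a b) ∧
    (∀ t ∈ Set.Icc a b, HasDerivWithinAt γ (γ' t) (Set.Icc a b) t) ∧
    (∀ t ∈ Set.Icc a b, ‖γ' t‖ = 1)

/-- The cone `C(w,α) = {v ∈ S¹ : ⟨v,w⟩ ≥ 1 − α}`. -/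
def cone (w : E2) (α : ℝ) : Set E2 :=
  {v ∈ sphere (0:E2) 1 | 1 - α ≤ ⟪v, w⟫}

/-- The double-sided cone `Ĉ(w,α) = {v ∈ S¹ : |⟨v,w⟩| ≥ 1 − α}`. -/
def hatC (w : E2) (α : ℝ) : Set E2 :=
  {v ∈ sphere (0:E2) 1 | 1 - α ≤ |⟪v, w⟫|}

/-- The line `x + ℝe`. -/
def line (x e : E2) : Set E2 := {y | ∃ t : ℝ, y = x + t • e}

def rot (v : E2) : E2 := WithLp.toLp 2 ![-(v 1), v 0]

lemma inner_coords (u v : E2) : ⟪u, v⟫ = u 0 * v 0 + u 1 * v 1 := by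
  simp [PiLp.inner_apply, Fin.sum_univ_two, RCLike.inner_apply, mul_comm]

lemma rot0 (v : E2) : rot v 0 = -(v 1) := rfl
lemma rot1 (v : E2) : rot v 1 = v 0 := rfl

lemma inner_rot_rot (u v : E2) : ⟪rot u, rot v⟫ = ⟪u, v⟫ := by
  simp [inner_coords, rot0, rot1]; ring

lemma norm_rot (v : E2) : ‖rot v‖ = ‖v‖ := by
  have h := inner_rot_rot v v
  rw [real_inner_self_eq_norm_sq, real_inner_self_eq_norm_sq] at h
  nlinarith [norm_nonneg (rot v), norm_nonneg v]



lemma key_scalar (u0 u1 e0 e1 w0 w1 β η : ℝ)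
    (hu2 : u0 * u0 + u1 * u1 = 1) (he2 : e0 * e0 + e1 * e1 = 1)
    (hw2 : w0 * w0 + w1 * w1 = 1)
    (hβ0 : 0 ≤ β) (hβ : β < 1 - η) (hη1 : η < 1)
    (hup : |u0 * w0 + u1 * w1| ≤ β) (her : 1 - η ≤ e0 * w0 + e1 * w1) :
    (1 - η) * Real.sqrt (1 - β ^ 2) - β * Real.sqrt (1 - (1 - η) ^ 2) ≤
      |u0 * -e1 + u1 * e0| := by
  set p := u0 * w0 + u1 * w1 with hp
  set q := -u0 * w1 + u1 * w0 with hq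
  set r := e0 * w0 + e1 * w1 with hr
  set s := -e0 * w1 + e1 * w0 with hs
  have hpq : p ^ 2 + q ^ 2 = 1 := by
    rw [hp, hq]; linear_combination (w0 * w0 + w1 * w1) * hu2 + hw2
  have hrs : r ^ 2 + s ^ 2 = 1 := by
    rw [hr, hs]; linear_combination (w0 * w0 + w1 * w1) * he2 + hw2
  have hkey : u0 * -e1 + u1 * e0 = q * r - p * s := by
    rw [hp, hq, hr, hs]; linear_combination (u0 * e1 - u1 * e0) * hw2
  rw [hkey]
  set X := Real.sqrt (1 - β ^ 2) with hX
  set Y := Real.sqrt (1 - (1 - η) ^ 2) with hY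
  have hX2 : X ^ 2 = 1 - β ^ 2 := Real.sq_sqrt (by nlinarith)
  have hY2 : Y ^ 2 = 1 - (1 - η) ^ 2 := Real.sq_sqrt (by nlinarith)
  have hXq : X ≤ |q| := by
    rw [hX, ← Real.sqrt_sq_eq_abs]
    exact Real.sqrt_le_sqrt (by nlinarith [abs_le.1 hup])
  have hsY : |s| ≤ Y := by
    rw [← Real.sqrt_sq_eq_abs, hY]
    exact Real.sqrt_le_sqrt (by nlinarith)
  have hr0 : (0:ℝ) ≤ r := by linarith
  have h1 : |q| * r - |p| * |s| ≤ |q * r - p * s| := by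
    calc |q| * r - |p| * |s| = |q| * |r| - |p| * |s| := by rw [abs_of_nonneg hr0]
      _ = |q * r| - |p * s| := by rw [abs_mul, abs_mul]
      _ ≤ |q * r - p * s| := abs_sub_abs_le_abs_sub _ _
  have hq0 : 0 ≤ |q| := abs_nonneg q
  have hX0 : 0 ≤ X := Real.sqrt_nonneg _
  have hY0 : 0 ≤ Y := Real.sqrt_nonneg _
  have h2 : |p| * |s| ≤ β * Y := mul_le_mul hup hsY (abs_nonneg s) hβ0
  have h3 : X * (1 - η) ≤ |q| * r := mul_le_mul hXq her (by linarith) hq0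
  linarith

lemma key_lb (u e w : E2) (hu : ‖u‖ = 1) (he : ‖e‖ = 1) (hw : ‖w‖ = 1)
    (β η : ℝ) (hβ0 : 0 ≤ β) (hβ : β < 1 - η) (hη1 : η < 1)
    (hup : |⟪u, w⟫| ≤ β) (her : 1 - η ≤ ⟪e, w⟫) :
    (1 - η) * Real.sqrt (1 - β ^ 2) - β * Real.sqrt (1 - (1 - η) ^ 2) ≤ |⟪u, rot e⟫| := by
  have hu2 : u 0 * u 0 + u 1 * u 1 = 1 := by
    have h : ⟪u, u⟫ = 1 := by rw [real_inner_self_eq_norm_sq, hu]; norm_num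
    rw [inner_coords] at h; exact h
  have he2 : e 0 * e 0 + e 1 * e 1 = 1 := by
    have h : ⟪e, e⟫ = 1 := by rw [real_inner_self_eq_norm_sq, he]; norm_num
    rw [inner_coords] at h; exact h
  have hw2 : w 0 * w 0 + w 1 * w 1 = 1 := by
    have h : ⟪w, w⟫ = 1 := by rw [real_inner_self_eq_norm_sq, hw]; norm_num
    rw [inner_coords] at h; exact h
  rw [inner_coords] at hup her
  rw [inner_coords, rot0, rot1]
  exact key_scalar (u 0) (u 1) (e 0) (e 1) (w 0) (w 1) β η hu2 he2 hw2 hβ0 hβ hη1 hup her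


lemma growth_mono {a b c : ℝ} (f g : ℝ → ℝ)
    (hd : ∀ t ∈ Set.Icc a b, HasDerivWithinAt f (g t) (Set.Icc a b) t)
    (hge : ∀ t ∈ Set.Icc a b, c ≤ g t) :
    ∀ s ∈ Set.Icc a b, ∀ t ∈ Set.Icc a b, s ≤ t → c * (t - s) ≤ f t - f s := by
  intro s hs t ht hst
  have hfc : ContinuousOn f (Set.Icc a b) := fun u hu => (hd u hu).continuousWithinAt
  have hdiff : DifferentiableOn ℝ f (interior (Set.Icc a b)) := by
    intro u hu
    rw [interior_Icc] at hu
    exact ((hd u (Set.Ioo_subset_Icc_self hu)).hasDerivAt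
      (Icc_mem_nhds hu.1 hu.2)).differentiableAt.differentiableWithinAt
  have hderge : ∀ u ∈ interior (Set.Icc a b), c ≤ deriv f u := by
    intro u hu
    rw [interior_Icc] at hu
    rw [((hd u (Set.Ioo_subset_Icc_self hu)).hasDerivAt (Icc_mem_nhds hu.1 hu.2)).deriv]
    exact hge u (Set.Ioo_subset_Icc_self hu)
  exact (convex_Icc a b).mul_sub_le_image_sub_of_le_deriv hfc hdiff hderge s hs t ht hst

lemma growth {a b c : ℝ} (hc : 0 < c) (f g : ℝ → ℝ)
    (hg : ContinuousOn g (Set.Icc a b))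
    (hd : ∀ t ∈ Set.Icc a b, HasDerivWithinAt f (g t) (Set.Icc a b) t)
    (hlb : ∀ t ∈ Set.Icc a b, c ≤ |g t|) :
    ∀ s ∈ Set.Icc a b, ∀ t ∈ Set.Icc a b, c * |t - s| ≤ |f t - f s| := by
  have hsign : (∀ t ∈ Set.Icc a b, c ≤ g t) ∨ (∀ t ∈ Set.Icc a b, g t ≤ -c) := by
    by_contra hcon
    push_neg at hcon
    obtain ⟨⟨t1, ht1, h1⟩, ⟨t2, ht2, h2⟩⟩ := hcon
    have hg1 : g t1 ≤ -c := by
      rcases le_abs.1 (hlb t1 ht1) with h | h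
      · linarith
      · linarith
    have hg2 : c ≤ g t2 := by
      rcases le_abs.1 (hlb t2 ht2) with h | h
      · exact h
      · linarith
    have hsub : Set.uIcc t1 t2 ⊆ Set.Icc a b := Set.uIcc_subset_Icc ht1 ht2
    have hiv := intermediate_value_uIcc (hg.mono hsub)
    have h0 : (0:ℝ) ∈ Set.uIcc (g t1) (g t2) := Set.Icc_subset_uIcc ⟨by linarith, by linarith⟩
    obtain ⟨t3, ht3, hgt3⟩ := hiv h0
    have := hlb t3 (hsub ht3)
    rw [hgt3] at this
    simp only [abs_zero] at this
    linarith
  have main : ∀ s ∈ Set.Icc a b, ∀ t ∈ Set.Icc a b, s ≤ t → c * (t - s) ≤ |f t - f s| := by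
    intro s hs t ht hst
    rcases hsign with hpos | hneg
    · have := growth_mono f g hd hpos s hs t ht hst
      exact this.trans (le_abs_self _)
    · have hd' : ∀ u ∈ Set.Icc a b, HasDerivWithinAt (fun v => -f v) (-g u) (Set.Icc a b) u :=
        fun u hu => (hd u hu).neg
      have hge' : ∀ u ∈ Set.Icc a b, c ≤ -g u := fun u hu => by linarith [hneg u hu]
      have := growth_mono (fun v => -f v) (fun v => -g v) hd' hge' s hs t ht hst
      simp only [neg_sub_neg] at this
      calc c * (t - s) ≤ f s - f t := this
        _ ≤ |f s - f t| := le_abs_self _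
        _ = |f t - f s| := abs_sub_comm _ _
  intro s hs t ht
  rcases le_total s t with hst | hts
  · rw [abs_of_nonneg (by linarith : (0:ℝ) ≤ t - s)]
    exact main s hs t ht hst
  · rw [abs_of_nonpos (by linarith : t - s ≤ 0), neg_sub]
    calc c * (s - t) ≤ |f s - f t| := main t ht s hs hts
      _ = |f t - f s| := abs_sub_comm _ _

lemma inner_rot_self (v : E2) : ⟪v, rot v⟫ = 0 := by
  simp [inner_coords, rot0, rot1]; ring

theorem stmt7' (w : E2) (hw : w ∈ sphere (0:E2) 1) (η : ℝ) (hη : η ∈ Set.Ioo (0:ℝ) 1)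
    (x e : ℕ → E2) (he : ∀ k, e k ∈ {v ∈ sphere (0:E2) 1 | 1 - η ≤ ⟪v, w⟫})
    (ρ : ℕ → ℝ) (hρ : ∀ k, 0 < ρ k) (hsum : Summable ρ)
    (E : Set E2)
    (hE : E = ⋂ n : ℕ, ⋃ k, ⋃ _ : n ≤ k,
      Metric.thickening (ρ k) {y | ∃ t : ℝ, y = x k + t • e k})
    (a b : ℝ) (γ γ' : ℝ → E2)
    (hab : a < b) (hγ'cont : ContinuousOn γ' (Set.Icc a b))
    (hderiv : ∀ t ∈ Set.Icc a b, HasDerivWithinAt γ (γ' t) (Set.Icc a b) t)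
    (hγ'norm : ∀ t ∈ Set.Icc a b, ‖γ' t‖ = 1)
    (hdir : ∀ t ∈ Set.Icc a b, ¬(γ' t ∈ sphere (0:E2) 1 ∧ 1 - η ≤ |⟪γ' t, w⟫|)) :
    volume (γ ⁻¹' E ∩ Set.Icc a b) = 0 := by
  obtain ⟨hη0, hη1⟩ := hη
  have hwn : ‖w‖ = 1 := mem_sphere_zero_iff_norm.1 hw
  have hen : ∀ k, ‖e k‖ = 1 := fun k => mem_sphere_zero_iff_norm.1 (he k).1
  have hew : ∀ k, 1 - η ≤ ⟪e k, w⟫ := fun k => (he k).2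
  -- the maximum β of |⟪γ' t, w⟫|
  have hφcont : ContinuousOn (fun t => |⟪γ' t, w⟫|) (Set.Icc a b) :=
    continuous_abs.comp_continuousOn
      ((continuous_id.inner (continuous_const (y := w))).comp_continuousOn hγ'cont)
  obtain ⟨t₀, ht₀, hmax⟩ := isCompact_Icc.exists_isMaxOn (Set.nonempty_Icc.2 hab.le) hφcont
  set β := |⟪γ' t₀, w⟫| with hβdef
  have hβ0 : 0 ≤ β := abs_nonneg _
  have hβlt : β < 1 - η := by
    by_contra hcon
    push_neg at hcon
    exact hdir t₀ ht₀ ⟨mem_sphere_zero_iff_norm.2 (hγ'norm t₀ ht₀), hcon⟩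
  have hβbd : ∀ t ∈ Set.Icc a b, |⟪γ' t, w⟫| ≤ β := fun t ht => hmax ht
  -- the transversality constant c
  set c : ℝ := (1 - η) * Real.sqrt (1 - β ^ 2) - β * Real.sqrt (1 - (1 - η) ^ 2) with hcdef
  have hc0 : 0 < c := by
    rw [hcdef]
    set X := Real.sqrt (1 - β ^ 2) with hX
    set Y := Real.sqrt (1 - (1 - η) ^ 2) with hY
    have hX2 : X ^ 2 = 1 - β ^ 2 := Real.sq_sqrt (by nlinarith)
    have hY2 : Y ^ 2 = 1 - (1 - η) ^ 2 := Real.sq_sqrt (by nlinarith)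
    have hXpos : 0 < X := Real.sqrt_pos.2 (by nlinarith)
    have hY0 : 0 ≤ Y := Real.sqrt_nonneg _
    nlinarith [mul_pos (by linarith : (0:ℝ) < 1 - η) hXpos, mul_nonneg hβ0 hY0]
  -- lower bound on the transversal derivative
  have hkb : ∀ k, ∀ t ∈ Set.Icc a b, c ≤ |⟪γ' t, rot (e k)⟫| := fun k t ht =>
    key_lb (γ' t) (e k) w (hγ'norm t ht) (hen k) hwn β η hβ0 hβlt hη1 (hβbd t ht) (hew k)
  -- the functions f k
  set f : ℕ → ℝ → ℝ := fun k t => ⟪γ t - x k, rot (e k)⟫ with hfdef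
  have hfd : ∀ k, ∀ t ∈ Set.Icc a b,
      HasDerivWithinAt (f k) (⟪γ' t, rot (e k)⟫) (Set.Icc a b) t := by
    intro k t ht
    have h1 : HasDerivWithinAt (fun u => γ u - x k) (γ' t) (Set.Icc a b) t :=
      (hderiv t ht).sub_const _
    have h2 := h1.inner (𝕜 := ℝ) (hasDerivWithinAt_const t (Set.Icc a b) (rot (e k)))
    simp only [inner_zero_right, zero_add] at h2
    exact h2
  have hgcont : ∀ k, ContinuousOn (fun t => ⟪γ' t, rot (e k)⟫) (Set.Icc a b) := fun k =>
    (continuous_id.inner (continuous_const (y := rot (e k)))).comp_continuousOn hγ'cont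
  have hgrow : ∀ k, ∀ s ∈ Set.Icc a b, ∀ t ∈ Set.Icc a b,
      c * |t - s| ≤ |f k t - f k s| := fun k =>
    growth hc0 (f k) (fun t => ⟪γ' t, rot (e k)⟫) (hgcont k) (hfd k) (hkb k)
  -- thickening membership implies small |f k|
  have hthick : ∀ k, ∀ t, γ t ∈ Metric.thickening (ρ k) {y | ∃ u : ℝ, y = x k + u • e k} →
      |f k t| < ρ k := by
    intro k t hy
    rw [Metric.mem_thickening_iff] at hy
    obtain ⟨z, ⟨u, rfl⟩, hz⟩ := hy
    have heq : f k t = ⟪γ t - (x k + u • e k), rot (e k)⟫ := by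
      rw [hfdef]
      simp only [inner_sub_left, inner_add_left, real_inner_smul_left, inner_rot_self]
      ring
    rw [heq]
    calc |⟪γ t - (x k + u • e k), rot (e k)⟫| ≤ ‖γ t - (x k + u • e k)‖ * ‖rot (e k)‖ :=
          abs_real_inner_le_norm _ _
      _ = dist (γ t) (x k + u • e k) := by rw [norm_rot, hen k, mul_one, dist_eq_norm]
      _ < ρ k := hz
  -- the sets A k
  set A : ℕ → Set ℝ := fun k => {t ∈ Set.Icc a b | |f k t| < ρ k} with hAdef
  have hAvol : ∀ k, volume (A k) ≤ ENNReal.ofReal (2 / c * ρ k) := by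
    intro k
    refine (Real.volume_le_diam _).trans (EMetric.diam_le ?_)
    intro s hs t ht
    rw [edist_dist, Real.dist_eq]
    refine ENNReal.ofReal_le_ofReal ?_
    have h1 : c * |s - t| ≤ |f k s - f k t| := hgrow k t ht.1 s hs.1
    have h2 : |f k s - f k t| ≤ |f k s| + |f k t| := abs_sub _ _
    have h3 : |f k s| + |f k t| < 2 * ρ k := by linarith [hs.2, ht.2]
    rw [show (2:ℝ) / c * ρ k = 2 * ρ k / c by ring, le_div_iff₀ hc0]
    nlinarith
  -- conclusion: Borel--Cantelli style estimate
  set S := γ ⁻¹' E ∩ Set.Icc a b with hSdef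
  have hsub : ∀ n : ℕ, S ⊆ ⋃ j : ℕ, A (j + n) := by
    intro n t ht
    have htE : γ t ∈ E := ht.1
    rw [hE] at htE
    have h := Set.mem_iInter.1 htE n
    simp only [Set.mem_iUnion] at h
    obtain ⟨k, hkn, hk⟩ := h
    refine Set.mem_iUnion.2 ⟨k - n, ?_⟩
    have hkeq : k - n + n = k := Nat.sub_add_cancel hkn
    rw [hkeq]
    exact ⟨ht.2, hthick k t hk⟩
  have hvol : ∀ n : ℕ, volume S ≤ ENNReal.ofReal (∑' j : ℕ, 2 / c * ρ (j + n)) := by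
    intro n
    have hsummable : Summable (fun j : ℕ => 2 / c * ρ (j + n)) :=
      ((summable_nat_add_iff n).2 hsum).mul_left _
    calc volume S ≤ volume (⋃ j : ℕ, A (j + n)) := measure_mono (hsub n)
      _ ≤ ∑' j : ℕ, volume (A (j + n)) := measure_iUnion_le _
      _ ≤ ∑' j : ℕ, ENNReal.ofReal (2 / c * ρ (j + n)) :=
          ENNReal.tsum_le_tsum (fun j => hAvol _)
      _ = ENNReal.ofReal (∑' j : ℕ, 2 / c * ρ (j + n)) :=
          (ENNReal.ofReal_tsum_of_nonneg (fun j => mul_nonneg (div_pos two_pos hc0).le (hρ _).le) hsummable).symm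
  have htend : Tendsto (fun n : ℕ => ENNReal.ofReal (∑' j : ℕ, 2 / c * ρ (j + n)))
      atTop (𝓝 0) := by
    have h1 : Tendsto (fun n : ℕ => ∑' j : ℕ, ρ (j + n)) atTop (𝓝 0) := tendsto_sum_nat_add ρ
    have h2 : Tendsto (fun n : ℕ => 2 / c * ∑' j : ℕ, ρ (j + n)) atTop (𝓝 (2 / c * 0)) :=
      h1.const_mul (2 / c)
    rw [mul_zero] at h2
    simp only [tsum_mul_left]
    simpa using ENNReal.tendsto_ofReal h2
  have hle : volume S ≤ 0 := ge_of_tendsto' htend hvol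
  exact le_antisymm hle (by simp)

/-- Let `L_k = x_k + ℝ e_k` be lines with directions `e_k ∈ C(w,η)`,
`ρ_k > 0` summable, and `E = ⋂_n ⋃_{k≥n} B(L_k,ρ_k)`. Every C¹ curve whose tangents avoid
the double cone `Ĉ(w,η)` meets `E` in a set of Lebesgue measure zero. -/
theorem stmt7 (w : E2) (hw : w ∈ sphere (0:E2) 1) (η : ℝ) (hη : η ∈ Set.Ioo (0:ℝ) 1)
    (x e : ℕ → E2) (he : ∀ k, e k ∈ cone w η)
    (ρ : ℕ → ℝ) (hρ : ∀ k, 0 < ρ k) (hsum : Summable ρ)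
    (E : Set E2)
    (hE : E = ⋂ n : ℕ, ⋃ k, ⋃ _ : n ≤ k, Metric.thickening (ρ k) (line (x k) (e k)))
    (a b : ℝ) (γ γ' : ℝ → E2) (hγ : IsC1Curve a b γ γ')
    (hdir : ∀ t ∈ Set.Icc a b, γ' t ∉ hatC w η) :
    volume (γ ⁻¹' E ∩ Set.Icc a b) = 0 := by
  obtain ⟨hab, hγ'cont, hderiv, hγ'norm⟩ := hγ
  exact stmt7' w hw η hη x e he ρ hρ hsum E hE a b γ γ' hab hγ'cont hderiv hγ'norm hdir

end
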